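/- Let d ≥ 1 and let p, q ∈ ℤ^d with ‖p − q‖ = 1. Then for every point x on the closed segment from p to q (i.e. x = (1−s)p + sq for some s ∈ [0,1]), the closed Euclidean ball B(x, 1/2) is contained in C_p ∪ C_q, where C_y = y + [−1/2, 1/2]^d denotes the closed unit cube centred at y ∈ ℤ^d. -/

import Mathlib

open MeasureTheory Filter

/-- Euclidean norm of a lattice point. -/
noncomputable def zNorm {d : ℕ} (x : Fin d → ℤ) : ℝ :=
  Real.sqrt (∑ i, ((x i : ℝ)) ^ 2)

/-- Two lattice points are adjacent (nearest neighbours) if their Euclidean distance is 1. -/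
def adjPt {d : ℕ} (x y : Fin d → ℤ) : Prop := zNorm (x - y) = 1

/-- The radius of a finite set: the maximal Euclidean norm of its points. -/
noncomputable def rad {d : ℕ} (A : Finset (Fin d → ℤ)) : ℝ :=
  if h : A.Nonempty then A.sup' h zNorm else 0

/-- A finite set is connected in the nearest-neighbour graph on `ℤ^d`. -/
def IsConnCluster {d : ℕ} (A : Finset (Fin d → ℤ)) : Prop :=
  ∀ x ∈ A, ∀ y ∈ A,
    Relation.ReflTransGen (fun a b => a ∈ A ∧ b ∈ A ∧ adjPt a b) x y

/-- Euclidean norm on `ℝ^d`. -/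
noncomputable def rNorm {d : ℕ} (x : Fin d → ℝ) : ℝ :=
  Real.sqrt (∑ i, (x i) ^ 2)

lemma coord_le_rNorm {d : ℕ} (x : Fin d → ℝ) (i : Fin d) : |x i| ≤ rNorm x := by
  rw [rNorm, ← Real.sqrt_sq_eq_abs]
  apply Real.sqrt_le_sqrt
  exact Finset.single_le_sum (fun j _ => sq_nonneg (x j)) (Finset.mem_univ i)

lemma oneD (a b z s : ℝ) (hs0 : 0 ≤ s) (hs1 : s ≤ 1) (hd : (a - b) ^ 2 = 1)
    (hz : |z - ((1 - s) * a + s * b)| ≤ 1 / 2) :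
    |z - a| ≤ 1 / 2 ∨ |z - b| ≤ 1 / 2 := by
  obtain ⟨h1, h2⟩ := abs_le.mp hz
  have hd' : a - b = 1 ∨ a - b = -1 := by
    rcases mul_eq_zero.mp (show (a - b - 1) * (a - b + 1) = 0 by nlinarith) with h | h
    · left; linarith
    · right; linarith
  rcases hd' with h | h
  · rcases le_or_gt z ((a + b) / 2) with hm | hm
    · right; rw [abs_le]; constructor <;> nlinarith
    · left; rw [abs_le]; constructor <;> nlinarith
  · rcases le_or_gt z ((a + b) / 2) with hm | hm
    · left; rw [abs_le]; constructor <;> nlinarith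
    · right; rw [abs_le]; constructor <;> nlinarith

lemma unit_vec {d : ℕ} (v : Fin d → ℤ) (h : zNorm v = 1) :
    ∃ i₀, (v i₀) ^ 2 = 1 ∧ ∀ i, i ≠ i₀ → v i = 0 := by
  have hsum : (∑ i, ((v i : ℝ)) ^ 2) = 1 := by
    have := congrArg (· ^ 2) h
    simpa [zNorm, Real.sq_sqrt (Finset.sum_nonneg fun i _ => sq_nonneg _)] using this
  have hsumZ : (∑ i, (v i) ^ 2) = 1 := by
    have : ((∑ i, (v i) ^ 2 : ℤ) : ℝ) = 1 := by push_cast; exact hsum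
    exact_mod_cast this
  have hne : ∃ i₀, v i₀ ≠ 0 := by
    by_contra h'
    push_neg at h'
    simp [h'] at hsumZ
  obtain ⟨i₀, hi₀⟩ := hne
  have h1 : 1 ≤ (v i₀) ^ 2 := by
    have := hi₀
    nlinarith [sq_nonneg (v i₀), Int.one_le_abs (by simpa using hi₀), sq_abs (v i₀)]
  have hle : (v i₀) ^ 2 ≤ ∑ i, (v i) ^ 2 :=
    Finset.single_le_sum (fun j _ => sq_nonneg (v j)) (Finset.mem_univ i₀)
  have heq : (v i₀) ^ 2 = 1 := le_antisymm (hsumZ ▸ hle) h1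
  refine ⟨i₀, heq, fun i hi => ?_⟩
  have hrest : ∑ j ∈ Finset.univ.erase i₀, (v j) ^ 2 = 0 := by
    have := Finset.add_sum_erase Finset.univ (fun j => (v j) ^ 2) (Finset.mem_univ i₀)
    linarith
  have := Finset.sum_eq_zero_iff_of_nonneg (fun j _ => sq_nonneg (v j)) |>.mp hrest i
    (Finset.mem_erase.mpr ⟨hi, Finset.mem_univ i⟩)
  exact pow_eq_zero_iff (n := 2) (by norm_num) |>.mp this

/-- if `p, q ∈ ℤ^d` are nearest neighbours, then for every point `x` on the
closed segment from `p` to `q`, the closed Euclidean ball `B(x, 1/2)` is contained in the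
union `C_p ∪ C_q` of the closed unit cubes centred at `p` and `q`. -/
theorem stmt16 {d : ℕ} (hd : 1 ≤ d) (p q : Fin d → ℤ)
    (hpq : zNorm (p - q) = 1) (s : ℝ) (hs : s ∈ Set.Icc (0 : ℝ) 1) :
    {z : Fin d → ℝ |
        rNorm (z - ((1 - s) • (fun i => (p i : ℝ)) + s • fun i => (q i : ℝ))) ≤ 1 / 2} ⊆
      {z : Fin d → ℝ | ∀ i, |z i - (p i : ℝ)| ≤ 1 / 2} ∪
      {z : Fin d → ℝ | ∀ i, |z i - (q i : ℝ)| ≤ 1 / 2} := by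
  obtain ⟨i₀, hsq, hrest⟩ := unit_vec (p - q) hpq
  obtain ⟨hs0, hs1⟩ := hs
  intro z hz
  simp only [Set.mem_setOf_eq] at hz
  have hcoord : ∀ i, |z i - ((1 - s) * (p i : ℝ) + s * (q i : ℝ))| ≤ 1 / 2 := by
    intro i
    have := coord_le_rNorm (z - ((1 - s) • (fun i => (p i : ℝ)) + s • fun i => (q i : ℝ))) i
    simp only [Pi.sub_apply, Pi.add_apply, Pi.smul_apply, smul_eq_mul] at this
    exact this.trans hz
  have hoth : ∀ i, i ≠ i₀ → (p i : ℝ) = q i := by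
    intro i hi
    have : p i - q i = 0 := by simpa using hrest i hi
    have : p i = q i := by omega
    exact_mod_cast congrArg (Int.cast : ℤ → ℝ) this
  have hsqR : ((p i₀ : ℝ) - q i₀) ^ 2 = 1 := by
    have : (((p - q) i₀ : ℤ) : ℝ) ^ 2 = 1 := by exact_mod_cast congrArg (Int.cast : ℤ → ℝ) hsq
    simpa [Pi.sub_apply] using this
  rcases oneD (p i₀ : ℝ) (q i₀ : ℝ) (z i₀) s hs0 hs1 hsqR (hcoord i₀) with h | h
  · left
    intro i
    rcases eq_or_ne i i₀ with rfl | hi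
    · exact h
    · have h2 := hcoord i
      rw [← hoth i hi] at h2
      rw [show (1 - s) * (p i : ℝ) + s * (p i : ℝ) = (p i : ℝ) by ring] at h2
      exact h2
  · right
    intro i
    rcases eq_or_ne i i₀ with rfl | hi
    · exact h
    · have h2 := hcoord i
      rw [hoth i hi] at h2
      rw [show (1 - s) * (q i : ℝ) + s * (q i : ℝ) = (q i : ℝ) by ring] at h2
      exact h2
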